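/- There is a closed continuous surjection $\psi : (\varprojlim X_\alpha)/(\varprojlim G_\alpha) \to \varprojlim (X_\alpha/G_\alpha)$ given on orbits of threads by $\overline{(x_\alpha)} \mapsto (\overline{x_\alpha})$. -/

import Mathlib

open MulAction

/-- The inverse limit of an inverse system of spaces, as a subspace of the
product. -/
abbrev InvLimit {Λ : Type*} [Preorder Λ] (X : Λ → Type*) [∀ α, TopologicalSpace (X α)]
    (π : ∀ {α β : Λ}, α ≤ β → X β → X α) : Type _ :=
  {x : ∀ α, X α // ∀ ⦃α β : Λ⦄ (h : α ≤ β), π h (x β) = x α}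

/-- The set of threads of an inverse system of groups, as a subgroup of the
product group. -/
def invLimitSubgroup {Λ : Type*} [Preorder Λ] (G : Λ → Type*) [∀ α, Group (G α)]
    (ν : ∀ {α β : Λ}, α ≤ β → G β →* G α) : Subgroup (∀ α, G α) where
  carrier := {g | ∀ ⦃α β : Λ⦄ (h : α ≤ β), ν h (g β) = g α}
  one_mem' := by intro α β h; simp
  mul_mem' := by intro a b ha hb α β h; simp [map_mul, ha h, hb h]
  inv_mem' := by intro a ha α β h; simp [map_inv, ha h]

/-- The orbit equivalence relation of the coordinatewise action of
`lim G_α` on `lim X_α`. -/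
def limOrbitSetoid {Λ : Type*} [Preorder Λ] (X : Λ → Type*) [∀ α, TopologicalSpace (X α)]
    (G : Λ → Type*) [∀ α, Group (G α)] [∀ α, MulAction (G α) (X α)]
    (π : ∀ {α β : Λ}, α ≤ β → X β → X α)
    (ν : ∀ {α β : Λ}, α ≤ β → G β →* G α) : Setoid (InvLimit X π) where
  r x y := ∃ g : invLimitSubgroup G ν, ∀ α, (g : ∀ α, G α) α • y.1 α = x.1 α
  iseqv := by
    constructor
    · exact fun x => ⟨1, fun α => one_smul _ _⟩
    · rintro x y ⟨g, hg⟩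
      exact ⟨g⁻¹, fun α => by
        rw [← hg α]; simp [Subgroup.coe_inv, Pi.inv_apply, inv_smul_smul]⟩
    · rintro x y z ⟨g, hg⟩ ⟨g', hg'⟩
      exact ⟨g * g', fun α => by
        simp only [Subgroup.coe_mul, Pi.mul_apply, mul_smul, hg' α, hg α]⟩

/-- The map induced on orbit spaces by an equivariant bonding map. -/
def quotBonding {Λ : Type*} [Preorder Λ] (X : Λ → Type*) [∀ α, TopologicalSpace (X α)]
    (G : Λ → Type*) [∀ α, Group (G α)] [∀ α, MulAction (G α) (X α)]
    (π : ∀ {α β : Λ}, α ≤ β → X β → X α)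
    (ν : ∀ {α β : Λ}, α ≤ β → G β →* G α)
    (hequiv : ∀ {α β : Λ} (h : α ≤ β) (g : G β) (x : X β),
      π h (g • x) = ν h g • π h x)
    {α β : Λ} (h : α ≤ β) :
    Quotient (orbitRel (G β) (X β)) → Quotient (orbitRel (G α) (X α)) :=
  Quotient.lift (fun x => Quotient.mk (orbitRel (G α) (X α)) (π h x)) <| by
    rintro a b hab
    obtain ⟨g, rfl⟩ : ∃ g : G β, g • b = a := hab
    exact Quotient.sound ⟨ν h g, (hequiv h g b).symm⟩

/-- The orbit space of a continuous action of a compact group on a compact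
Hausdorff space is Hausdorff. -/
lemma aux_t2_orbitSpace {G X : Type*} [Group G] [TopologicalSpace G] [IsTopologicalGroup G]
    [CompactSpace G] [TopologicalSpace X] [CompactSpace X] [T2Space X]
    [MulAction G X] [ContinuousSMul G X] :
    T2Space (Quotient (MulAction.orbitRel G X)) := by
  rw [t2_iff_isClosed_diagonal]
  set R := MulAction.orbitRel G X
  let π : X → Quotient R := Quotient.mk R
  have hoq : IsOpenQuotientMap π := MulAction.isOpenQuotientMap_quotientMk
  have hq : Topology.IsQuotientMap (Prod.map π π) :=
    (hoq.isOpenMap.prodMap hoq.isOpenMap).isQuotientMap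
      (hoq.continuous.prodMap hoq.continuous)
      (hoq.surjective.prodMap hoq.surjective)
  rw [← hq.isClosed_preimage]
  have hrange : Prod.map π π ⁻¹' Set.diagonal (Quotient R) =
      Set.range (fun gx : G × X => (gx.1 • gx.2, gx.2)) := by
    ext ⟨x₁, x₂⟩
    simp only [Set.mem_preimage, Prod.map_apply, Set.mem_diagonal_iff, Set.mem_range,
      Prod.mk.injEq, Prod.exists, exists_eq_right]
    constructor
    · intro hx
      obtain ⟨g, hg⟩ : x₁ ∈ MulAction.orbit G x₂ := Quotient.exact hx
      exact ⟨g, hg⟩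
    · rintro ⟨g, rfl⟩
      exact Quotient.sound ⟨g, rfl⟩
  rw [hrange]
  exact (isCompact_range ((continuous_fst.smul continuous_snd).prodMk continuous_snd)).isClosed

/-- There is a closed continuous surjection
`(lim X_α)/(lim G_α) → lim (X_α/G_α)` sending the orbit of a thread `(x_α)`
to the thread of orbits `(x̄_α)`. -/
theorem orbit_space_of_limit_onto_limit_of_orbit_spaces
    {Λ : Type*} [Preorder Λ] [IsDirected Λ (· ≤ ·)]
    (X : Λ → Type*) [∀ α, TopologicalSpace (X α)]
    [∀ α, CompactSpace (X α)] [∀ α, T2Space (X α)] [∀ α, Nonempty (X α)]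
    (G : Λ → Type*) [∀ α, Group (G α)] [∀ α, TopologicalSpace (G α)]
    [∀ α, IsTopologicalGroup (G α)] [∀ α, CompactSpace (G α)]
    [∀ α, MulAction (G α) (X α)] [∀ α, ContinuousSMul (G α) (X α)]
    (π : ∀ {α β : Λ}, α ≤ β → X β → X α)
    (hπcont : ∀ {α β : Λ} (h : α ≤ β), Continuous (π h))
    (hπid : ∀ (α : Λ) (x : X α), π (le_refl α) x = x)
    (hπcomp : ∀ {α β γ : Λ} (h₁ : α ≤ β) (h₂ : β ≤ γ) (x : X γ),
      π h₁ (π h₂ x) = π (h₁.trans h₂) x)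
    (ν : ∀ {α β : Λ}, α ≤ β → G β →* G α)
    (hνcont : ∀ {α β : Λ} (h : α ≤ β), Continuous (ν h))
    (hνid : ∀ (α : Λ) (g : G α), ν (le_refl α) g = g)
    (hνcomp : ∀ {α β γ : Λ} (h₁ : α ≤ β) (h₂ : β ≤ γ) (g : G γ),
      ν h₁ (ν h₂ g) = ν (h₁.trans h₂) g)
    (hequiv : ∀ {α β : Λ} (h : α ≤ β) (g : G β) (x : X β),
      π h (g • x) = ν h g • π h x) :
    ∃ ψ : Quotient (limOrbitSetoid X G π ν) →
        {q : ∀ α, Quotient (MulAction.orbitRel (G α) (X α)) //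
          ∀ ⦃α β : Λ⦄ (h : α ≤ β), quotBonding X G π ν hequiv h (q β) = q α},
      (∀ (x : InvLimit X π) (α : Λ),
        (ψ (Quotient.mk (limOrbitSetoid X G π ν) x)).1 α =
          Quotient.mk (MulAction.orbitRel (G α) (X α)) (x.1 α)) ∧
      Continuous ψ ∧ Function.Surjective ψ ∧ IsClosedMap ψ := by
  classical
  haveI : ∀ α, T2Space (Quotient (MulAction.orbitRel (G α) (X α))) :=
    fun α => aux_t2_orbitSpace
  -- the underlying map on threads
  set f : InvLimit X π →
      {q : ∀ α, Quotient (MulAction.orbitRel (G α) (X α)) //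
        ∀ ⦃α β : Λ⦄ (h : α ≤ β), quotBonding X G π ν hequiv h (q β) = q α} :=
    fun x => ⟨fun α => Quotient.mk (MulAction.orbitRel (G α) (X α)) (x.1 α), by
      intro α β h
      show Quotient.mk (MulAction.orbitRel (G α) (X α)) (π h (x.1 β)) = _
      exact congrArg _ (x.2 h)⟩ with hf
  have hwd : ∀ a b : InvLimit X π, (limOrbitSetoid X G π ν).r a b → f a = f b := by
    rintro a b ⟨g, hg⟩
    apply Subtype.ext
    funext α
    exact Quotient.sound ⟨(g : ∀ α, G α) α, hg α⟩
  refine ⟨Quotient.lift f hwd, fun x α => rfl, ?_, ?_, ?_⟩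
  · -- continuity
    apply Continuous.quotient_lift
    refine Continuous.subtype_mk (continuous_pi fun α => ?_) _
    exact continuous_quot_mk.comp ((continuous_apply α).comp continuous_subtype_val)
  · -- surjectivity
    rintro ⟨q, hq⟩
    rcases isEmpty_or_nonempty Λ with hΛ | hΛ
    · refine ⟨Quotient.mk _ ⟨fun α => isEmptyElim α, fun α => isEmptyElim α⟩, ?_⟩
      exact Subtype.ext (funext fun α => isEmptyElim α)
    · -- the approximating closed sets
      set T : Λ → Set (∀ α, X α) := fun β =>
        {x | ∀ α (h : α ≤ β), π h (x β) = x α ∧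
          Quotient.mk (MulAction.orbitRel (G α) (X α)) (x α) = q α} with hT
      have hTclosed : ∀ β, IsClosed (T β) := by
        intro β
        have : T β = ⋂ α, ⋂ h : α ≤ β,
            ({x : ∀ α, X α | π h (x β) = x α} ∩
              {x : ∀ α, X α |
                Quotient.mk (MulAction.orbitRel (G α) (X α)) (x α) = q α}) := by
          ext x
          simp only [hT, Set.mem_setOf_eq, Set.mem_iInter, Set.mem_inter_iff]
        rw [this]
        refine isClosed_iInter fun α => isClosed_iInter fun h => (IsClosed.inter ?_ ?_)
        · exact isClosed_eq ((hπcont h).comp (continuous_apply β)) (continuous_apply α)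
        · haveI : T1Space (Quotient (MulAction.orbitRel (G α) (X α))) := inferInstance
          exact ((isClosed_singleton (x := q α)).preimage continuous_quotient_mk').preimage
            (continuous_apply α)
      have hTne : ∀ β, (T β).Nonempty := by
        intro β
        obtain ⟨y, hy⟩ := Quotient.exists_rep (q β)
        refine ⟨fun α => if h : α ≤ β then π h y else Classical.arbitrary (X α),
          fun α h => ?_⟩
        constructor
        · simp only [dif_pos h, dif_pos (le_refl β), hπid]
        · simp only [dif_pos h]
          rw [← hq h, ← hy]
          rfl
      have hTdir : Directed (· ⊇ ·) T := by
        intro β γ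
        obtain ⟨δ, hβδ, hγδ⟩ := directed_of (· ≤ ·) β γ
        have key : ∀ {ε : Λ} (hε : ε ≤ δ), T δ ⊆ T ε := by
          intro ε hε x hx α h
          obtain ⟨h1, h2⟩ := hx α (h.trans hε)
          obtain ⟨h3, _⟩ := hx ε hε
          refine ⟨?_, h2⟩
          rw [← h3, hπcomp h hε (x δ), h1]
        exact ⟨δ, key hβδ, key hγδ⟩
      obtain ⟨x, hx⟩ := IsCompact.nonempty_iInter_of_directed_nonempty_isCompact_isClosed
        T hTdir hTne (fun β => (hTclosed β).isCompact) hTclosed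
      simp only [Set.mem_iInter] at hx
      refine ⟨Quotient.mk _ ⟨x, fun α β h => (hx β α h).1⟩, ?_⟩
      exact Subtype.ext (funext fun α => (hx α α (le_refl α)).2)
  · -- closedness
    haveI : CompactSpace (InvLimit X π) := by
      apply isCompact_iff_compactSpace.mp
      have : IsClosed {x : ∀ α, X α | ∀ ⦃α β : Λ⦄ (h : α ≤ β), π h (x β) = x α} := by
        have : {x : ∀ α, X α | ∀ ⦃α β : Λ⦄ (h : α ≤ β), π h (x β) = x α} =
            ⋂ α, ⋂ β, ⋂ h : α ≤ β, {x : ∀ α, X α | π h (x β) = x α} := by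
          ext x
          simp only [Set.mem_setOf_eq, Set.mem_iInter]
        rw [this]
        exact isClosed_iInter fun α => isClosed_iInter fun β => isClosed_iInter fun h =>
          isClosed_eq ((hπcont h).comp (continuous_apply β)) (continuous_apply α)
      exact this.isCompact
    apply Continuous.isClosedMap
    apply Continuous.quotient_lift
    refine Continuous.subtype_mk (continuous_pi fun α => ?_) _
    exact continuous_quot_mk.comp ((continuous_apply α).comp continuous_subtype_val)
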